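/- Let E be a semilattice (commutative idempotent semigroup) with partial order x ≤ y iff x*y = x, endowed with a compact Hausdorff topology making multiplication continuous. Then for each λ ∈ E the lower cone ↓λ = {e ∈ E : e ≤ λ} is closed in E, and for any downward-directed (chain) subset L ⊆ E, the set ↓L = ⋂_{λ∈L} ↓λ is a nonempty closed subset, and every open set containing ↓L contains ↓λ for some λ ∈ L. -/

import Mathlib

/-- In a compact Hausdorff topological semilattice `E` (commutative idempotent semigroup
with continuous multiplication), with order `x ≤ y` iff `x * y = x`: every lower cone
`↓a = {e : e * a = e}` is closed; for a nonempty chain `L`, the set `↓L = ⋂_{a ∈ L} ↓a`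
is a nonempty closed set, and every open set containing `↓L` contains some `↓a`, `a ∈ L`. -/
theorem semilattice_lower_cones {E : Type*} [CommSemigroup E] [TopologicalSpace E]
    [CompactSpace E] [T2Space E] [ContinuousMul E]
    (hidem : ∀ x : E, x * x = x) :
    (∀ a : E, IsClosed {e : E | e * a = e}) ∧
    (∀ L : Set E, L.Nonempty → (∀ a ∈ L, ∀ b ∈ L, a * b = a ∨ a * b = b) →
      IsClosed (⋂ a ∈ L, {e : E | e * a = e}) ∧
      (⋂ a ∈ L, {e : E | e * a = e}).Nonempty ∧
      (∀ W : Set E, IsOpen W → (⋂ a ∈ L, {e : E | e * a = e}) ⊆ W →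
        ∃ a ∈ L, {e : E | e * a = e} ⊆ W)) := by
  have hclosed : ∀ a : E, IsClosed {e : E | e * a = e} := fun a =>
    isClosed_eq (continuous_id.mul continuous_const) continuous_id
  refine ⟨hclosed, fun L hL hchain => ?_⟩
  have hmono : ∀ a b : E, a * b = a → {e : E | e * a = e} ⊆ {e : E | e * b = e} := by
    intro a b hab e he
    simp only [Set.mem_setOf_eq] at *
    calc e * b = e * a * b := by rw [he]
    _ = e * (a * b) := mul_assoc _ _ _
    _ = e * a := by rw [hab]
    _ = e := he
  haveI : Nonempty L := hL.to_subtype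
  have hdir : ∀ (s : L → Set E), (∀ a : L, {e : E | e * (a : E) = e} ⊆ s a ∧
      s a ⊆ {e : E | e * (a : E) = e}) → Directed (· ⊇ ·) s := by
    intro s hs a b
    rcases hchain a a.2 b b.2 with h | h
    · exact ⟨a, (hs a).2.trans ((subset_rfl.trans (hs a).1)),
        (hs a).2.trans ((hmono a b h).trans (hs b).1)⟩
    · exact ⟨b, (hs b).2.trans ((hmono b a (by rw [mul_comm]; exact h)).trans (hs a).1),
        (hs b).2.trans (hs b).1⟩
  refine ⟨isClosed_biInter fun a _ => hclosed a, ?_, ?_⟩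
  · rw [Set.biInter_eq_iInter]
    apply IsCompact.nonempty_iInter_of_directed_nonempty_isCompact_isClosed
    · intro a b
      rcases hchain a a.2 b b.2 with h | h
      · exact ⟨a, subset_rfl, hmono a b h⟩
      · exact ⟨b, hmono b a (by rw [mul_comm]; exact h), subset_rfl⟩
    · exact fun a => ⟨a, hidem a⟩
    · exact fun a => (hclosed a).isCompact
    · exact fun a => hclosed a
  · intro W hW hsub
    by_contra h
    push_neg at h
    have hne : ∀ a : L, ({e : E | e * (a : E) = e} \ W).Nonempty := by
      intro a
      rcases Set.not_subset.mp (h a a.2) with ⟨x, hx, hxW⟩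
      exact ⟨x, hx, hxW⟩
    have hdir' : Directed (· ⊇ ·) (fun a : L => {e : E | e * (a : E) = e} \ W) := by
      intro a b
      rcases hchain a a.2 b b.2 with hc | hc
      · exact ⟨a, Set.diff_subset_diff_left subset_rfl,
          Set.diff_subset_diff_left (hmono a b hc)⟩
      · exact ⟨b, Set.diff_subset_diff_left (hmono b a (by rw [mul_comm]; exact hc)),
          Set.diff_subset_diff_left subset_rfl⟩
    obtain ⟨x, hx⟩ := IsCompact.nonempty_iInter_of_directed_nonempty_isCompact_isClosed
      (fun a : L => {e : E | e * (a : E) = e} \ W) hdir' hne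
      (fun a => ((hclosed a).sdiff hW).isCompact)
      (fun a => (hclosed a).sdiff hW)
    have hxW : x ∉ W := (Set.mem_iInter.mp hx (Classical.arbitrary L)).2
    apply hxW
    apply hsub
    exact Set.mem_biInter fun a ha => (Set.mem_iInter.mp hx ⟨a, ha⟩).1
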